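/- arXiv:1912.08448 — 5 statements merged into one kernel-verified Lean document; each statement's English description precedes it below -/
import Mathlib

section
/- Let A be an abelian group generated by a subset G, let B be an abelian group, f : A → B, and m ∈ ℕ₀. Then fdeg(f) ≤ m if and only if for all g_1, …, g_{m+1} ∈ G, (∏_{i=1}^{m+1} (τ_{g_i} − 1)) * f = 0. -/
open scoped BigOperators

/-- Action of the integral group ring `ℤ[A]` on functions `A → B`:
`(τ_a * f)(x) = f(x + a)`, extended linearly. -/
noncomputable def groupRingAct {A B : Type*} [AddCommGroup A] [AddCommGroup B]
    (r : AddMonoidAlgebra ℤ A) (f : A → B) : A → B :=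
  fun x => r.coeff.sum fun a z => z • f (x + a)

/-- The augmentation ideal of the group ring `R[A]`. -/
noncomputable def augIdealR (R : Type*) (A : Type*) [CommRing R] [AddCommGroup A] :
    Ideal (AddMonoidAlgebra R A) :=
  Ideal.span {r : AddMonoidAlgebra R A | ∃ a : A, r = AddMonoidAlgebra.single a 1 - 1}

/-- The augmentation ideal of `ℤ[A]`. -/
noncomputable def augIdeal (A : Type*) [AddCommGroup A] : Ideal (AddMonoidAlgebra ℤ A) :=
  augIdealR ℤ A

/-- The functional degree of `f : A → B`: the least `n` with `I^(n+1) * f = 0`,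
where `I` is the augmentation ideal of `ℤ[A]`; `⊤` if there is no such `n`. -/
noncomputable def fdeg {A B : Type*} [AddCommGroup A] [AddCommGroup B] (f : A → B) : ℕ∞ :=
  sInf {N : ℕ∞ | ∃ n : ℕ, N = (n : ℕ∞) ∧
    ∀ r ∈ augIdeal A ^ (n + 1), groupRingAct r f = 0}

section FdegAux

open scoped Pointwise

variable {A B : Type*} [AddCommGroup A] [AddCommGroup B]

private lemma act_zero (f : A → B) : groupRingAct (0 : AddMonoidAlgebra ℤ A) f = 0 := by
  funext x; simp [groupRingAct]

private lemma act_add (r s : AddMonoidAlgebra ℤ A) (f : A → B) :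
    groupRingAct (r + s) f = groupRingAct r f + groupRingAct s f := by
  funext x
  simp only [groupRingAct, Pi.add_apply, AddMonoidAlgebra.coeff_add]
  exact Finsupp.sum_add_index' (fun a => zero_smul ℤ _) (fun a z₁ z₂ => add_smul z₁ z₂ _)

private lemma act_fun_zero (r : AddMonoidAlgebra ℤ A) : groupRingAct r (0 : A → B) = 0 := by
  funext x
  simp [groupRingAct]

private lemma act_fun_add (r : AddMonoidAlgebra ℤ A) (f h : A → B) :
    groupRingAct r (f + h) = groupRingAct r f + groupRingAct r h := by
  funext x
  simp only [groupRingAct, Pi.add_apply, smul_add]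
  exact Finsupp.sum_add

private lemma act_single (a : A) (z : ℤ) (f : A → B) (x : A) :
    groupRingAct (AddMonoidAlgebra.single a z) f x = z • f (x + a) := by
  simp [groupRingAct, AddMonoidAlgebra.coeff_single, Finsupp.sum_single_index]

private lemma act_mul (r s : AddMonoidAlgebra ℤ A) (f : A → B) :
    groupRingAct (r * s) f = groupRingAct r (groupRingAct s f) := by
  induction r using AddMonoidAlgebra.induction_linear with
  | zero => simp [act_zero]
  | add p q hp hq => rw [add_mul, act_add, act_add, hp, hq]
  | single a z =>
    induction s using AddMonoidAlgebra.induction_linear with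
    | zero => simp [act_zero, act_fun_zero]
    | add p q hp hq => rw [mul_add, act_add, act_add, act_fun_add, hp, hq]
    | single b w =>
      rw [AddMonoidAlgebra.single_mul_single]
      funext x
      rw [act_single, act_single, act_single, mul_smul, add_assoc]

/-- The annihilator of `f` under the group-ring action, as an ideal. -/
private noncomputable def fdegAnn (f : A → B) : Ideal (AddMonoidAlgebra ℤ A) where
  carrier := {r | groupRingAct r f = 0}
  zero_mem' := act_zero f
  add_mem' := by
    intro r s hr hs
    simp only [Set.mem_setOf_eq] at *
    rw [act_add, hr, hs, add_zero]
  smul_mem' := by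
    intro c r hr
    simp only [smul_eq_mul, Set.mem_setOf_eq] at *
    rw [act_mul, hr, act_fun_zero]

private lemma mem_fdegAnn {f : A → B} {r : AddMonoidAlgebra ℤ A} :
    r ∈ fdegAnn f ↔ groupRingAct r f = 0 := Iff.rfl

private lemma prod_mem_pow {R : Type*} [CommRing R] (I : Ideal R) (n : ℕ) (x : Fin n → R)
    (hx : ∀ i, x i ∈ I) : ∏ i, x i ∈ I ^ n := by
  induction n with
  | zero => simp [Ideal.one_eq_top]
  | succ n ih =>
    rw [Fin.prod_univ_castSucc, pow_succ]
    exact Ideal.mul_mem_mul (ih _ fun i => hx _) (hx _)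

private lemma span_pow_le {R : Type*} [CommRing R] (S : Set R) (n : ℕ) :
    Ideal.span S ^ n ≤
      Ideal.span {r | ∃ g : Fin n → R, (∀ i, g i ∈ S) ∧ r = ∏ i, g i} := by
  induction n with
  | zero =>
    rw [pow_zero, Ideal.one_eq_top]
    refine top_le_iff.mpr ((Ideal.eq_top_iff_one _).mpr (Ideal.subset_span ?_))
    exact ⟨fun i => i.elim0, fun i => i.elim0, by simp⟩
  | succ n ih =>
    rw [pow_succ]
    calc Ideal.span S ^ n * Ideal.span S
        ≤ Ideal.span {r | ∃ g : Fin n → R, (∀ i, g i ∈ S) ∧ r = ∏ i, g i} * Ideal.span S :=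
          Ideal.mul_mono_left ih
      _ = Ideal.span ({r | ∃ g : Fin n → R, (∀ i, g i ∈ S) ∧ r = ∏ i, g i} * S) :=
          (Ideal.span_mul_span' _ _)
      _ ≤ _ := by
          rw [Ideal.span_le]
          rintro x hx
          obtain ⟨p, hp, s, hs, rfl⟩ := hx
          obtain ⟨g, hg, rfl⟩ := hp
          refine Ideal.subset_span ⟨Fin.snoc g s, ?_, ?_⟩
          · intro i
            refine Fin.lastCases ?_ ?_ i
            · simpa using hs
            · intro j; simpa using hg j
          · rw [Fin.prod_univ_castSucc]
            simp

private lemma aug_eq_span (G : Set A) (hG : AddSubgroup.closure G = ⊤) :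
    augIdeal A =
      Ideal.span {r | ∃ g ∈ G, r = AddMonoidAlgebra.single g (1 : ℤ) - 1} := by
  apply le_antisymm
  · rw [augIdeal, augIdealR, Ideal.span_le]
    rintro r ⟨a, rfl⟩
    have ha : a ∈ AddSubgroup.closure G := by rw [hG]; trivial
    induction ha using AddSubgroup.closure_induction with
    | mem g hg => exact Ideal.subset_span ⟨g, hg, rfl⟩
    | zero =>
      have : AddMonoidAlgebra.single (0 : A) (1 : ℤ) - 1 = 0 := by
        rw [AddMonoidAlgebra.one_def]; ring
      rw [this]; exact Ideal.zero_mem _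
    | add a b _ _ ha hb =>
      have key : AddMonoidAlgebra.single (a + b) (1 : ℤ) - 1 =
          AddMonoidAlgebra.single a 1 * (AddMonoidAlgebra.single b 1 - 1) +
            (AddMonoidAlgebra.single a 1 - 1) := by
        rw [mul_sub, AddMonoidAlgebra.single_mul_single, mul_one]; ring
      rw [key]
      exact Ideal.add_mem _ (Ideal.mul_mem_left _ _ hb) ha
    | neg a _ ha =>
      have key : AddMonoidAlgebra.single (-a) (1 : ℤ) - 1 =
          -(AddMonoidAlgebra.single (-a) 1 * (AddMonoidAlgebra.single a 1 - 1)) := by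
        rw [mul_sub, AddMonoidAlgebra.single_mul_single, mul_one, neg_add_cancel,
          ← AddMonoidAlgebra.one_def]
        ring
      rw [key]
      exact neg_mem (Ideal.mul_mem_left _ _ ha)
  · refine Ideal.span_mono ?_
    rintro r ⟨g, _, rfl⟩
    exact ⟨g, rfl⟩

private lemma fdeg_le_iff (f : A → B) (m : ℕ) :
    fdeg f ≤ (m : ℕ∞) ↔ ∀ r ∈ augIdeal A ^ (m + 1), groupRingAct r f = 0 := by
  constructor
  · intro h
    by_contra hc
    have hlb : ((m : ℕ∞) + 1) ≤ fdeg f := by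
      apply le_sInf
      rintro N ⟨n, rfl, hn⟩
      by_contra hN
      push_neg at hN
      have hnm : n ≤ m := by
        have : (n : ℕ∞) < ((m + 1 : ℕ) : ℕ∞) := by exact_mod_cast hN
        exact_mod_cast Nat.lt_succ_iff.mp (by exact_mod_cast this)
      exact hc fun r hr =>
        hn r (Ideal.pow_le_pow_right (by omega) hr)
    have : ((m : ℕ∞) + 1) ≤ (m : ℕ∞) := hlb.trans h
    have : (m + 1 : ℕ) ≤ m := by exact_mod_cast this
    omega
  · intro h
    exact sInf_le ⟨m, rfl, h⟩

end FdegAux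

theorem fdeg_le_iff_generators {A B : Type*} [AddCommGroup A] [AddCommGroup B]
    (G : Set A) (hG : AddSubgroup.closure G = ⊤) (f : A → B) (m : ℕ) :
    fdeg f ≤ (m : ℕ∞) ↔
      ∀ g : Fin (m + 1) → A, (∀ i, g i ∈ G) →
        groupRingAct (∏ i : Fin (m + 1), (AddMonoidAlgebra.single (g i) (1 : ℤ) - 1)) f = 0 := by
  rw [fdeg_le_iff]
  constructor
  · intro h g hg
    apply h
    exact prod_mem_pow _ _ _ fun i => Ideal.subset_span ⟨g i, rfl⟩
  · intro h r hr
    rw [aug_eq_span G hG] at hr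
    have hr' := span_pow_le _ (m + 1) hr
    have hann :
        Ideal.span {r | ∃ e : Fin (m + 1) → AddMonoidAlgebra ℤ A,
            (∀ i, e i ∈ {r | ∃ g ∈ G, r = AddMonoidAlgebra.single g (1 : ℤ) - 1}) ∧
            r = ∏ i, e i} ≤ fdegAnn f := by
      rw [Ideal.span_le]
      rintro x ⟨e, he, rfl⟩
      choose g hgG hge using he
      have : ∏ i, e i = ∏ i, (AddMonoidAlgebra.single (g i) (1 : ℤ) - 1) :=
        Finset.prod_congr rfl fun i _ => hge i
      simp only [SetLike.mem_coe, mem_fdegAnn, this]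
      exact h g hgG
    exact hann hr'
end

section
/- Let A, B, C be abelian groups and let f : A → B and g : B → C have finite functional degrees. Then fdeg(g ∘ f) ≤ fdeg(g) · fdeg(f). -/
open scoped BigOperators

namespace FdegAux

variable {A B C : Type*} [AddCommGroup A] [AddCommGroup B] [AddCommGroup C]

local notation "act" => groupRingAct

@[simp] lemma act_single (a : A) (z : ℤ) (u : A → B) :
    act (AddMonoidAlgebra.single a z) u = fun x => z • u (x + a) := by
  funext x
  simp [groupRingAct, AddMonoidAlgebra.coeff_single, Finsupp.sum_single_index]

@[simp] lemma act_zero (u : A → B) : act (0 : AddMonoidAlgebra ℤ A) u = 0 := by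
  funext x; simp [groupRingAct]

lemma act_add (r s : AddMonoidAlgebra ℤ A) (u : A → B) :
    act (r + s) u = act r u + act s u := by
  classical
  funext x
  simp only [groupRingAct, Pi.add_apply, AddMonoidAlgebra.coeff_add]
  rw [Finsupp.sum_add_index]
  · intro a _; simp
  · intro a _ b₁ b₂; simp [add_smul]

lemma act_sub (r s : AddMonoidAlgebra ℤ A) (u : A → B) :
    act (r - s) u = act r u - act s u := by
  funext x
  simp only [groupRingAct, Pi.sub_apply, AddMonoidAlgebra.coeff_sub]
  rw [Finsupp.sum_sub_index]
  intro a b₁ b₂; simp [sub_smul]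

lemma act_one (u : A → B) : act (1 : AddMonoidAlgebra ℤ A) u = u := by
  funext x
  have : (1 : AddMonoidAlgebra ℤ A) = AddMonoidAlgebra.single 0 1 := rfl
  rw [this, act_single]; simp

lemma act_funadd (r : AddMonoidAlgebra ℤ A) (u v : A → B) :
    act r (u + v) = act r u + act r v := by
  funext x
  simp only [groupRingAct, Pi.add_apply, smul_add]
  exact Finsupp.sum_add

lemma act_funzero (r : AddMonoidAlgebra ℤ A) : act r (0 : A → B) = 0 := by
  funext x; simp [groupRingAct]

lemma act_mul (r s : AddMonoidAlgebra ℤ A) (u : A → B) :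
    act (r * s) u = act r (act s u) := by
  induction r using AddMonoidAlgebra.induction_linear with
  | zero => simp [act_zero]
  | add f g hf hg => rw [add_mul, act_add, hf, hg, act_add]
  | single a z =>
    induction s using AddMonoidAlgebra.induction_linear with
    | zero => simp [act_zero, act_funzero]
    | add f g hf hg => rw [mul_add, act_add, hf, hg, act_add, act_funadd]
    | single b w =>
      rw [AddMonoidAlgebra.single_mul_single, act_single, act_single, act_single]
      funext x
      simp [mul_smul, add_assoc]



/-- single difference operator -/
def del {M : Type*} [AddCommGroup M] (a : A) (u : A → M) : A → M := fun x => u (x + a) - u x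

/-- iterated difference -/
def D {M : Type*} [AddCommGroup M] (l : List A) (u : A → M) : A → M :=
  l.foldl (fun v a => del a v) u

variable {M : Type*} [AddCommGroup M]

@[simp] lemma D_nil (u : A → M) : D ([] : List A) u = u := rfl
@[simp] lemma D_cons (a : A) (l : List A) (u : A → M) : D (a :: l) u = D l (del a u) := rfl

lemma del_add (a : A) (u v : A → M) : del a (u + v) = del a u + del a v := by
  funext x; simp [del]; abel

lemma del_sub (a : A) (u v : A → M) : del a (u - v) = del a u - del a v := by
  funext x; simp [del]; abel

@[simp] lemma del_zero (a : A) : del a (0 : A → M) = 0 := by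
  funext x; simp [del]

@[simp] lemma del_const (a : A) (c : M) : del a (fun _ => c) = 0 := by
  funext x; simp [del]

lemma D_zero (l : List A) : D l (0 : A → M) = 0 := by
  induction l with
  | nil => rfl
  | cons a l ih => simp [ih]

lemma D_add (l : List A) (u v : A → M) : D l (u + v) = D l u + D l v := by
  induction l generalizing u v with
  | nil => rfl
  | cons a l ih => simp [del_add, ih]

lemma del_comm (a b : A) (u : A → M) : del a (del b u) = del b (del a u) := by
  funext x
  simp only [del]
  rw [add_right_comm]
  abel

lemma D_del (l : List A) (a : A) (u : A → M) : D l (del a u) = del a (D l u) := by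
  induction l generalizing u with
  | nil => rfl
  | cons b l ih => rw [D_cons, D_cons, del_comm b a, ih]

lemma D_mem (J : Submodule (AddMonoidAlgebra ℤ B) (AddMonoidAlgebra ℤ B))
    (l : List A) (u : A → AddMonoidAlgebra ℤ B) (h : ∀ x, u x ∈ J) :
    ∀ x, D l u x ∈ J := by
  induction l generalizing u with
  | nil => exact h
  | cons a l ih =>
    refine ih _ (fun x => ?_)
    exact sub_mem (h _) (h _)

lemma act_gen (a : A) (u : A → B) :
    act (AddMonoidAlgebra.single a 1 - 1) u = del a u := by
  rw [act_sub, act_single, act_one]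
  funext x; simp [del]

lemma D_eq_act (l : List A) (u : A → B) :
    D l u = act ((l.map (fun a => AddMonoidAlgebra.single a (1:ℤ) - 1)).prod) u := by
  induction l generalizing u with
  | nil => simp [act_one]
  | cons a l ih =>
    rw [D_cons, List.map_cons, List.prod_cons, act_mul, ← act_gen a u, ih]
    rw [← act_mul, ← act_mul, mul_comm]

lemma gen_mem (a : A) : AddMonoidAlgebra.single a (1:ℤ) - 1 ∈ augIdeal A :=
  Ideal.subset_span ⟨a, rfl⟩

lemma single_sub_single_mem (b c : B) :
    AddMonoidAlgebra.single b (1:ℤ) - AddMonoidAlgebra.single c 1 ∈ augIdeal B := by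
  have : AddMonoidAlgebra.single b (1:ℤ) - AddMonoidAlgebra.single c 1
      = (AddMonoidAlgebra.single b (1:ℤ) - 1) - (AddMonoidAlgebra.single c (1:ℤ) - 1) := by
    ring
  rw [this]
  exact sub_mem (gen_mem b) (gen_mem c)

lemma list_prod_mem_pow {R : Type*} [CommRing R] (I : Ideal R) (l : List R)
    (h : ∀ y ∈ l, y ∈ I) : l.prod ∈ I ^ l.length := by
  induction l with
  | nil => simp [Ideal.one_eq_top]
  | cons a l ih =>
    rw [List.prod_cons, List.length_cons, pow_succ']
    exact Ideal.mul_mem_mul (h a (by simp)) (ih (fun y hy => h y (by simp [hy])))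

lemma span_pow_le {R : Type*} [CommRing R] (S : Set R) :
    ∀ (N : ℕ) (J : Ideal R),
      (∀ l : List R, l.length = N → (∀ y ∈ l, y ∈ S) → l.prod ∈ J) →
      Ideal.span S ^ N ≤ J := by
  intro N
  induction N with
  | zero =>
    intro J h
    have h1 : (1:R) ∈ J := by simpa using h [] rfl (by simp)
    simpa [Ideal.one_eq_top, Ideal.eq_top_iff_one] using (Ideal.eq_top_iff_one J).2 h1
  | succ N ih =>
    intro J h
    rw [pow_succ]
    rw [Ideal.mul_le]
    intro r hr s hs
    -- {s | r * s ∈ J} contains span S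
    have key : ∀ t ∈ S, r * t ∈ J := by
      intro t ht
      have := ih (Submodule.comap (LinearMap.mulLeft R t) J) ?_ hr
      · simpa [mul_comm] using this
      · intro l hl hmem
        have : (t :: l).prod ∈ J := h (t :: l) (by simp [hl]) (by
          intro y hy
          rcases List.mem_cons.1 hy with h1 | h2
          · rwa [h1]
          · exact hmem y h2)
        simpa [List.prod_cons] using this
    have : Ideal.span S ≤ Submodule.comap (LinearMap.mulLeft R r) J := by
      rw [Ideal.span_le]
      intro t ht
      simpa using key t ht
    simpa using this hs

def shift {M : Type*} [AddCommGroup M] (a : A) (v : A → M) : A → M := fun x => v (x + a)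

lemma del_shift {M : Type*} [AddCommGroup M] (a b : A) (v : A → M) :
    del b (shift a v) = shift a (del b v) := by
  funext x
  simp only [del, shift]
  rw [add_right_comm]

lemma D_shift {M : Type*} [AddCommGroup M] (l : List A) (a : A) (v : A → M) :
    D l (shift a v) = shift a (D l v) := by
  induction l generalizing v with
  | nil => rfl
  | cons b l ih => rw [D_cons, del_shift, ih, D_cons]

lemma leibniz (a : A) (u v : A → AddMonoidAlgebra ℤ B) :
    del a (u * v) = del a u * shift a v + u * del a v := by
  funext x
  simp only [del, shift, Pi.mul_apply, Pi.add_apply]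
  ring

lemma prodDiff (I : Ideal (AddMonoidAlgebra ℤ B)) :
    ∀ (L : ℕ) (u v : A → AddMonoidAlgebra ℤ B) (p q r : ℕ → ℕ),
      (∀ i j, r (i + j) ≤ p i + q j) →
      (∀ m : List A, m.length ≤ L → ∀ x, D m u x ∈ I ^ p m.length) →
      (∀ m : List A, m.length ≤ L → ∀ x, D m v x ∈ I ^ q m.length) →
      ∀ l : List A, l.length ≤ L → ∀ x, D l (u * v) x ∈ I ^ r l.length := by
  intro L
  induction L with
  | zero =>
    intro u v p q r hr hu hv l hl x
    have : l = [] := List.length_eq_zero_iff.1 (Nat.le_zero.1 hl)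
    subst this
    have h1 := hu [] (by simp) x
    have h2 := hv [] (by simp) x
    have : u x * v x ∈ I ^ (p 0 + q 0) := by
      rw [pow_add]; exact Ideal.mul_mem_mul h1 h2
    have hle : I ^ (p 0 + q 0) ≤ I ^ r 0 := Ideal.pow_le_pow_right (by simpa using hr 0 0)
    exact hle this
  | succ L ih =>
    intro u v p q r hr hu hv l hl x
    cases l with
    | nil =>
      have h1 := hu [] (by simp) x
      have h2 := hv [] (by simp) x
      have : u x * v x ∈ I ^ (p 0 + q 0) := by
        rw [pow_add]; exact Ideal.mul_mem_mul h1 h2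
      exact Ideal.pow_le_pow_right (by simpa using hr 0 0) this
    | cons a l₀ =>
      rw [D_cons, leibniz, D_add]
      have hl₀ : l₀.length ≤ L := by simpa using hl
      have t1 : D l₀ (del a u * shift a v) x ∈ I ^ r (l₀.length + 1) := by
        refine ih (del a u) (shift a v) (fun s => p (s+1)) q (fun s => r (s+1))
          (fun i j => by simpa [Nat.add_right_comm] using hr (i+1) j) ?_ ?_ l₀ hl₀ x
        · intro m hm y
          have : D (a :: m) u y ∈ I ^ p (a :: m).length :=
            hu (a :: m) (by simpa using Nat.succ_le_succ hm) y
          simpa using this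
        · intro m hm y
          rw [D_shift]
          exact hv m (le_trans hm (Nat.le_succ L)) (y + a)
      have t2 : D l₀ (u * del a v) x ∈ I ^ r (l₀.length + 1) := by
        refine ih u (del a v) p (fun s => q (s+1)) (fun s => r (s+1))
          (fun i j => by simpa [← Nat.add_assoc] using hr i (j+1)) ?_ ?_ l₀ hl₀ x
        · intro m hm y
          exact hu m (le_trans hm (Nat.le_succ L)) y
        · intro m hm y
          have : D (a :: m) v y ∈ I ^ q (a :: m).length :=
            hv (a :: m) (by simpa using Nat.succ_le_succ hm) y
          simpa using this
      have : (l₀.length + 1) = (a :: l₀).length := by simp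
      rw [← this]
      exact add_mem t1 t2


lemma hr_key (n K i j : ℕ) (hs : (K+1)*(n+1) ≤ i + j) :
    K + 2 ≤ (if i = 0 then 0 else min ((i-1)/(n+1)) K + 1)
      + (if j = 0 then 1 else if n = 0 then K+2 else (j-1)/n + 1) := by
  by_cases hj : j = 0
  · subst hj
    have hi : i ≠ 0 := by
      intro h
      rw [h] at hs
      have hpos : 0 < (K+1)*(n+1) := Nat.mul_pos (Nat.succ_pos K) (Nat.succ_pos n)
      omega
    rw [if_neg hi, if_pos rfl]
    have hi' : 1 ≤ i := Nat.pos_of_ne_zero hi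
    have hK : K ≤ (i-1)/(n+1) := by
      rw [Nat.le_div_iff_mul_le (Nat.succ_pos n)]
      zify [hi'] at hs ⊢
      nlinarith
    have : K ≤ min ((i-1)/(n+1)) K := le_min hK le_rfl
    omega
  · rw [if_neg hj]
    by_cases hn : n = 0
    · rw [if_pos hn]
      exact le_add_self
    · rw [if_neg hn]
      have hn' : 0 < n := Nat.pos_of_ne_zero hn
      have hj' : 1 ≤ j := Nat.pos_of_ne_zero hj
      set t := (j-1)/n with ht
      set m := (j-1) % n with hm
      have hdm : n * t + m = j - 1 := Nat.div_add_mod _ _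
      have hmod : m < n := Nat.mod_lt _ hn'
      clear_value t m
      by_cases hti : i = 0
      · rw [if_pos hti]
        rw [hti] at hs
        have hq : K + 1 ≤ t := by
          have : (K+1) * n ≤ j - 1 := by
            zify [hj'] at hs hdm ⊢
            nlinarith
          rw [ht, Nat.le_div_iff_mul_le hn']
          exact this
        omega
      · rw [if_neg hti]
        have hi' : 1 ≤ i := Nat.pos_of_ne_zero hti
        rcases le_or_gt K t with hKt | htK
        · have : 0 ≤ min ((i-1)/(n+1)) K := Nat.zero_le _
          omega
        · have hdiv : K - t ≤ (i-1)/(n+1) := by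
            rw [Nat.le_div_iff_mul_le (Nat.succ_pos n)]
            zify [hi', hj', (le_of_lt htK : t ≤ K)] at hs hdm ⊢
            nlinarith [Int.natCast_nonneg m, Int.natCast_nonneg t]
          have hmin : K - t ≤ min ((i-1)/(n+1)) K := le_min hdiv (Nat.sub_le _ _)
          omega

lemma hu_le (n K s : ℕ) (hs : 1 ≤ s) : (min ((s-1)/(n+1)) K) * (n+1) + 1 ≤ s := by
  have h2 : (min ((s-1)/(n+1)) K) * (n+1) ≤ s - 1 := by
    rw [← Nat.le_div_iff_mul_le (Nat.succ_pos n)]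
    exact min_le_left _ _
  omega

lemma hv_le (n j : ℕ) (hj : 1 ≤ j) (hn : 0 < n) : ((j-1)/n) * n + 1 ≤ j := by
  have := Nat.div_mul_le_self (j-1) n
  omega

lemma main_claim : ∀ (n : ℕ) (f : A → B),
    (∀ l : List A, l.length = n + 1 → ∀ x, D l f x = 0) →
    ∀ (k : ℕ) (l : List A), k * n + 1 ≤ l.length → ∀ x,
      D l (fun y => AddMonoidAlgebra.single (f y) (1:ℤ)) x ∈ (augIdeal B) ^ (k+1) := by
  intro n
  induction n with
  | zero =>
    intro f hf k l hl x
    cases l with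
    | nil => simp at hl
    | cons a l₀ =>
      have hfa : ∀ y, f (y + a) = f y := by
        intro y
        have h1 : del a f y = 0 := by
          have := hf [a] rfl y
          simpa using this
        simpa [del, sub_eq_zero] using h1
      have hzero : del a (fun y => AddMonoidAlgebra.single (f y) (1:ℤ)) = 0 := by
        funext y
        simp [del, hfa]
      rw [D_cons, hzero, D_zero]
      exact zero_mem _
  | succ n IH =>
    intro f hf k
    induction k using Nat.strong_induction_on with
    | _ k SIH =>
      cases k with
      | zero =>
        intro l hl x
        cases l with
        | nil => simp at hl
        | cons a l₀ =>
          rw [D_cons]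
          simp only [zero_add, pow_one]
          refine D_mem (augIdeal B) l₀ _ (fun y => ?_) x
          exact single_sub_single_mem _ _
      | succ K =>
        intro l hl x
        cases l with
        | nil => simp at hl
        | cons a l₀ =>
          have hl₀ : (K+1)*(n+1) ≤ l₀.length := by
            simp only [List.length_cons] at hl
            omega
          set G : A → AddMonoidAlgebra ℤ B :=
            fun y => AddMonoidAlgebra.single (del a f y) (1:ℤ) - 1 with hG
          have hFG : del a (fun y => AddMonoidAlgebra.single (f y) (1:ℤ))
              = (fun y => AddMonoidAlgebra.single (f y) (1:ℤ)) * G := by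
            funext y
            have e : f y + (f (y + a) - f y) = f (y + a) := by abel
            simp only [hG, del, Pi.mul_apply, mul_sub, mul_one,
              AddMonoidAlgebra.single_mul_single, one_mul, e]
          rw [D_cons, hFG]
          have hf' : ∀ l' : List A, l'.length = n + 1 → ∀ y, D l' (del a f) y = 0 := by
            intro l' h y
            have := hf (a :: l') (by simp [h]) y
            simpa using this
          have hu : ∀ m : List A, m.length ≤ l₀.length → ∀ y,
              D m (fun y => AddMonoidAlgebra.single (f y) (1:ℤ)) y
                ∈ (augIdeal B) ^ (if m.length = 0 then 0 else min ((m.length - 1)/(n+1)) K + 1) := by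
            intro m hm y
            by_cases h0 : m.length = 0
            · rw [if_pos h0, pow_zero, Ideal.one_eq_top]
              exact Submodule.mem_top
            · rw [if_neg h0]
              exact SIH (min ((m.length - 1)/(n+1)) K)
                (Nat.lt_succ_of_le (min_le_right _ _)) m
                (hu_le n K m.length (Nat.pos_of_ne_zero h0)) y
          have hv : ∀ m : List A, m.length ≤ l₀.length → ∀ y,
              D m G y ∈ (augIdeal B) ^
                (if m.length = 0 then 1 else if n = 0 then K+2 else (m.length - 1)/n + 1) := by
            intro m hm y
            cases m with
            | nil =>
              have : (augIdeal B) ^ (if (List.length ([] : List A)) = 0 then 1 else if n = 0 then K+2 else ((List.length ([] : List A)) - 1)/n + 1) = augIdeal B := by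
                simp
              rw [this]
              exact gen_mem _
            | cons b m₀ =>
              have hne : (b :: m₀).length ≠ 0 := by simp
              rw [if_neg hne]
              have hGd : del b G = del b (fun y => AddMonoidAlgebra.single (del a f y) (1:ℤ)) := by
                funext z
                simp only [hG, del]
                abel
              rw [D_cons, hGd]
              by_cases hn0 : n = 0
              · rw [if_pos hn0]
                have := IH (del a f) hf' (K+1) (b :: m₀) (by simp [hn0]) y
                exact this
              · rw [if_neg hn0]
                exact IH (del a f) hf' (((b :: m₀).length - 1)/n) (b :: m₀)
                  (hv_le n (b :: m₀).length (by simp) (Nat.pos_of_ne_zero hn0)) y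
          have hres := prodDiff (augIdeal B) l₀.length
            (fun y => AddMonoidAlgebra.single (f y) (1:ℤ)) G
            (fun s => if s = 0 then 0 else min ((s - 1)/(n+1)) K + 1)
            (fun s => if s = 0 then 1 else if n = 0 then K+2 else (s - 1)/n + 1)
            (fun s => if (K+1)*(n+1) ≤ s then K + 2 else 0)
            (fun i j => by
              show (if (K+1)*(n+1) ≤ i + j then K + 2 else 0)
                ≤ (if i = 0 then 0 else min ((i - 1)/(n+1)) K + 1)
                  + (if j = 0 then 1 else if n = 0 then K+2 else (j - 1)/n + 1)
              by_cases h : (K+1)*(n+1) ≤ i + j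
              · rw [if_pos h]
                exact hr_key n K i j h
              · rw [if_neg h]
                exact Nat.zero_le _)
            hu hv l₀ le_rfl x
          have hres' : D l₀ ((fun y => AddMonoidAlgebra.single (f y) (1:ℤ)) * G) x
              ∈ (augIdeal B) ^ (if (K+1)*(n+1) ≤ l₀.length then K + 2 else 0) := hres
          rw [if_pos hl₀] at hres'
          exact hres'

lemma act_values_mem (J : Ideal (AddMonoidAlgebra ℤ B)) (c : AddMonoidAlgebra ℤ A)
    (v : A → AddMonoidAlgebra ℤ B) (hv : ∀ x, v x ∈ J) :
    ∀ x, groupRingAct c v x ∈ J := by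
  intro x
  unfold groupRingAct
  apply Submodule.sum_mem
  intro a _
  exact Submodule.smul_of_tower_mem J _ (hv (x + a))

/-- the annihilator-style ideal {r | ∀ x, act r u x ∈ J} -/
noncomputable def memIdeal (J : Ideal (AddMonoidAlgebra ℤ B)) (u : A → AddMonoidAlgebra ℤ B) :
    Ideal (AddMonoidAlgebra ℤ A) where
  carrier := {r | ∀ x, groupRingAct r u x ∈ J}
  add_mem' := by
    intro p q hp hq x
    have := congrFun (act_add p q u) x
    rw [this]
    exact add_mem (hp x) (hq x)
  zero_mem' := by
    intro x
    rw [act_zero]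
    exact zero_mem J
  smul_mem' := by
    intro c r hr x
    rw [smul_eq_mul]
    have := congrFun (act_mul c r u) x
    rw [this]
    exact act_values_mem J c _ hr x

lemma act_mem_of_D (J : Ideal (AddMonoidAlgebra ℤ B)) (u : A → AddMonoidAlgebra ℤ B) (N : ℕ)
    (h : ∀ l : List A, l.length = N → ∀ x, D l u x ∈ J) :
    ∀ r ∈ (augIdeal A) ^ N, ∀ x, groupRingAct r u x ∈ J := by
  have key : ∀ l : List (AddMonoidAlgebra ℤ A),
      (∀ y ∈ l, y ∈ {r : AddMonoidAlgebra ℤ A | ∃ a : A, r = AddMonoidAlgebra.single a 1 - 1}) →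
      ∃ la : List A, la.length = l.length ∧ groupRingAct l.prod u = D la u := by
    intro l
    induction l with
    | nil =>
      intro _
      exact ⟨[], rfl, by rw [List.prod_nil, act_one]; rfl⟩
    | cons y l ih =>
      intro hmem
      obtain ⟨la, hlen, hla⟩ := ih (fun z hz => hmem z (by simp [hz]))
      obtain ⟨a, ha⟩ := hmem y (by simp)
      refine ⟨a :: la, by simp [hlen], ?_⟩
      rw [List.prod_cons, act_mul, hla, ha, act_gen, ← D_del]
      rfl
  intro r hr x
  have hle : (augIdeal A) ^ N ≤ memIdeal J u := by
    apply span_pow_le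
    intro l hl hmem
    obtain ⟨la, hlen, hla⟩ := key l hmem
    intro y
    rw [hla]
    exact h la (hlen.trans hl) y
  exact hle hr x

lemma act_comp_eval (f : A → B) (g : B → C) (r : AddMonoidAlgebra ℤ A) (x : A) :
    groupRingAct r (g ∘ f) x
      = groupRingAct (groupRingAct r (fun y => AddMonoidAlgebra.single (f y) (1:ℤ)) x) g 0 := by
  induction r using AddMonoidAlgebra.induction_linear with
  | zero => simp [act_zero]
  | add p q hp hq =>
    rw [act_add, act_add, Pi.add_apply, Pi.add_apply, act_add, Pi.add_apply, hp, hq]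
  | single a z =>
    have h1 : (z • AddMonoidAlgebra.single (f (x + a)) (1:ℤ)) = AddMonoidAlgebra.single (f (x + a)) z := by
      rw [AddMonoidAlgebra.smul_single, smul_eq_mul, mul_one]
    simp only [act_single]
    rw [h1, act_single]
    simp [Function.comp]

lemma D_of_pow_zero (f : A → B) (n : ℕ)
    (hP : ∀ r ∈ augIdeal A ^ (n + 1), groupRingAct r f = 0) :
    ∀ l : List A, l.length = n + 1 → ∀ x, D l f x = 0 := by
  intro l hl x
  rw [D_eq_act]
  have hmem : (l.map (fun a => AddMonoidAlgebra.single a (1:ℤ) - 1)).prod ∈ augIdeal A ^ (n+1) := by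
    have := list_prod_mem_pow (augIdeal A) (l.map (fun a => AddMonoidAlgebra.single a (1:ℤ) - 1))
      (by
        intro y hy
        obtain ⟨a, _, ha⟩ := List.mem_map.1 hy
        rw [← ha]
        exact gen_mem a)
    rwa [List.length_map, hl] at this
  rw [hP _ hmem]
  rfl

end FdegAux

lemma fdeg_attain {X Y : Type*} [AddCommGroup X] [AddCommGroup Y] (h : X → Y) (hlt : fdeg h < ⊤) :
    ∃ n : ℕ, fdeg h = (n : ℕ∞) ∧ ∀ r ∈ augIdeal X ^ (n+1), groupRingAct r h = 0 := by
  classical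
  have hne : fdeg h ≠ ⊤ := ne_of_lt hlt
  have h1 : fdeg h < fdeg h + 1 := by
    rw [ENat.lt_add_one_iff hne]
  have h2 : sInf {N : ℕ∞ | ∃ n : ℕ, N = (n : ℕ∞) ∧
      ∀ r ∈ augIdeal X ^ (n + 1), groupRingAct r h = 0} < fdeg h + 1 := h1
  obtain ⟨b, hb, hblt⟩ := sInf_lt_iff.1 h2
  have hble : b ≤ fdeg h := (ENat.lt_add_one_iff hne).1 hblt
  have hbe : b = fdeg h := le_antisymm hble (sInf_le hb)
  obtain ⟨n, hn, hP⟩ := hb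
  exact ⟨n, by rw [← hbe, hn], hP⟩

theorem fdeg_comp_le {A B C : Type*} [AddCommGroup A] [AddCommGroup B] [AddCommGroup C]
    (f : A → B) (g : B → C) (hf : fdeg f < ⊤) (hg : fdeg g < ⊤) :
    fdeg (g ∘ f) ≤ fdeg g * fdeg f := by
  classical
  obtain ⟨nf, hfe, hPf⟩ := fdeg_attain f hf
  obtain ⟨ng, hge, hPg⟩ := fdeg_attain g hg
  rw [hfe, hge, ← Nat.cast_mul]
  have hmain : ∀ r ∈ augIdeal A ^ (ng * nf + 1), groupRingAct r (g ∘ f) = 0 := by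
    intro r hr
    funext x
    rw [FdegAux.act_comp_eval f g r x]
    have hlists := FdegAux.D_of_pow_zero f nf hPf
    have hD : ∀ l : List A, l.length = ng * nf + 1 → ∀ y,
        FdegAux.D l (fun y => AddMonoidAlgebra.single (f y) (1:ℤ)) y ∈ augIdeal B ^ (ng + 1) :=
      fun l hl y => FdegAux.main_claim nf f hlists ng l (le_of_eq hl.symm) y
    have hmem := FdegAux.act_mem_of_D (augIdeal B ^ (ng+1)) _ (ng*nf+1) hD r hr x
    rw [hPg _ hmem]
    rfl
  exact sInf_le ⟨ng * nf, rfl, hmain⟩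
end

section
/- Let p and q be distinct primes, P an abelian p-group and Q an abelian q-group. Then every function f : P → Q of finite functional degree is constant. -/
open scoped BigOperators

private lemma pow_eq_sum_sub_one {R : Type*} [CommRing R] (T : R) (m : ℕ) :
    T ^ m = ∑ i ∈ Finset.range (m + 1), m.choose i • (T - 1) ^ i := by
  conv_lhs => rw [← sub_add_cancel T 1, add_pow]
  refine Finset.sum_congr rfl fun i _ => ?_
  rw [one_pow, mul_one, nsmul_eq_mul, mul_comm]

theorem finite_fdeg_pq_const {p q : ℕ} (hp : p.Prime) (hq : q.Prime) (hpq : p ≠ q)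
    {P Q : Type*} [AddCommGroup P] [AddCommGroup Q]
    (hP : ∀ x : P, ∃ n : ℕ, p ^ n • x = 0)
    (hQ : ∀ y : Q, ∃ n : ℕ, q ^ n • y = 0)
    (f : P → Q) (hf : fdeg f < ⊤) :
    ∃ c : Q, ∀ x : P, f x = c := by
  have hne : {N : ℕ∞ | ∃ n : ℕ, N = (n : ℕ∞) ∧
      ∀ r ∈ augIdeal P ^ (n + 1), groupRingAct r f = 0}.Nonempty := by
    by_contra h
    rw [Set.not_nonempty_iff_eq_empty] at h
    rw [fdeg, h, sInf_empty] at hf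
    exact lt_irrefl _ hf
  obtain ⟨N, n, -, hn⟩ := hne
  have key : ∀ (x a : P), f (x + a) = f x := by
    intro x a
    set φ : AddMonoidAlgebra ℤ P →ₗ[ℤ] Q :=
      (Finsupp.linearCombination ℤ (fun b => f (x + b))) ∘ₗ
        (AddMonoidAlgebra.coeffLinearEquiv ℤ).toLinearMap with hφ
    have hφs : ∀ (b : P) (c : ℤ), φ (AddMonoidAlgebra.single b c) = c • f (x + b) := by
      intro b c
      rw [hφ]
      exact Finsupp.linearCombination_single _ _ _
    have hrep : ∀ r : AddMonoidAlgebra ℤ P, groupRingAct r f x = φ r := by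
      intro r
      rw [hφ]
      exact (Finsupp.linearCombination_apply _ r.coeff).symm
    have hone : φ 1 = f x := by
      rw [AddMonoidAlgebra.one_def]
      rw [hφs]
      rw [one_smul, add_zero]
    set T : AddMonoidAlgebra ℤ P := AddMonoidAlgebra.single a 1 with hT
    set g : ℕ → Q := fun i => φ ((T - 1) ^ i) with hg
    have hT1 : T - 1 ∈ augIdeal P := Ideal.subset_span ⟨a, rfl⟩
    have hgz : ∀ i, n + 1 ≤ i → g i = 0 := by
      intro i hi
      have hmem : (T - 1) ^ i ∈ augIdeal P ^ (n + 1) := by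
        have hpow : (T - 1) ^ i = (T - 1) ^ (n + 1) * (T - 1) ^ (i - (n + 1)) := by
          rw [← pow_add]; congr 1; omega
        rw [hpow]
        exact Ideal.mul_mem_right _ _ (Ideal.pow_mem_pow hT1 _)
      have h0 := hn _ hmem
      have := congrFun h0 x
      rw [hrep] at this
      simpa [hg] using this
    have hmain : ∀ m : ℕ, f (x + m • a) =
        ∑ i ∈ Finset.range (m + 1), m.choose i • g i := by
      intro m
      have h1 : f (x + m • a) = φ (T ^ m) := by
        rw [hT, AddMonoidAlgebra.single_pow, one_pow]
        rw [hφs]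
        rw [one_smul]
      rw [h1, pow_eq_sum_sub_one, map_sum]
      refine Finset.sum_congr rfl fun i _ => ?_
      rw [map_nsmul]
    -- torsion data
    obtain ⟨k, hk⟩ := hP a
    choose Mi hMi using fun i => hQ (g i)
    set M : ℕ := (Finset.range (n + 2)).sup Mi with hM
    have hMkill : ∀ i, i ≤ n + 1 → q ^ M • g i = 0 := by
      intro i hi
      have h1 : Mi i ≤ M := Finset.le_sup (Finset.mem_range.mpr (by omega))
      calc q ^ M • g i = q ^ (M - Mi i) • (q ^ (Mi i) • g i) := by
            rw [← mul_smul, ← pow_add, Nat.sub_add_cancel h1]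
        _ = 0 := by rw [hMi, smul_zero]
    set v : ℕ := (Nat.factorial n).factorization q with hv
    set L : ℕ := M + v + 1 with hL
    have hco : Nat.Coprime (p ^ k) (q ^ L) :=
      Nat.Coprime.pow _ _ ((Nat.coprime_primes hp hq).mpr hpq)
    obtain ⟨m, hm0, hm1⟩ := Nat.chineseRemainder hco 0 1
    have hqL1 : 1 < q ^ L := Nat.one_lt_pow (by omega) hq.one_lt
    have hm_pos : 1 ≤ m := by
      rcases Nat.eq_zero_or_pos m with h | h
      · exfalso
        have h2 : (0 : ℕ) ≡ 1 [MOD q ^ L] := h ▸ hm1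
        have h3 : q ^ L ∣ 1 := by
          simpa using (Nat.modEq_iff_dvd' (Nat.zero_le 1)).mp h2
        exact absurd (Nat.le_of_dvd one_pos h3) (by omega)
      · exact h
    have hpk_dvd : p ^ k ∣ m := Nat.modEq_zero_iff_dvd.mp hm0
    have hqL_dvd : q ^ L ∣ m - 1 := (Nat.modEq_iff_dvd' hm_pos).mp hm1.symm
    have hma : x + m • a = x := by
      obtain ⟨t, rfl⟩ := hpk_dvd
      rw [mul_comm, mul_smul, hk, smul_zero, add_zero]
    have hdvd : ∀ i, 2 ≤ i → i ≤ n → q ^ M ∣ m.choose i := by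
      intro i h2 hni
      have hd1 : (m - 1) ∣ m.descFactorial i := by
        rw [Nat.descFactorial_eq_prod_range]
        exact Finset.dvd_prod_of_mem _ (Finset.mem_range.mpr (by omega))
      have hd2 : q ^ L ∣ Nat.factorial i * m.choose i := by
        rw [← Nat.descFactorial_eq_factorial_mul_choose]
        exact hqL_dvd.trans hd1
      set e : ℕ := (Nat.factorial i).factorization q with he
      have heo : Nat.factorial i = q ^ e * (Nat.factorial i / q ^ e) :=
        (Nat.ordProj_mul_ordCompl_eq_self (Nat.factorial i) q).symm
      have hec : Nat.Coprime q (Nat.factorial i / q ^ e) :=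
        Nat.coprime_ordCompl hq (Nat.factorial_ne_zero i)
      have hev : e ≤ v := by
        have h1 : q ^ e ∣ Nat.factorial n :=
          (Nat.ordProj_dvd _ _).trans (Nat.factorial_dvd_factorial hni)
        exact (Nat.Prime.pow_dvd_iff_le_factorization hq
          (Nat.factorial_ne_zero n)).mp h1
      have hd3 : q ^ e * q ^ (L - e) ∣ q ^ e * ((Nat.factorial i / q ^ e) * m.choose i) := by
        rw [← pow_add, Nat.add_sub_cancel' (by omega : e ≤ L), ← mul_assoc, ← heo]
        exact hd2
      have hd4 : q ^ (L - e) ∣ (Nat.factorial i / q ^ e) * m.choose i :=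
        (Nat.mul_dvd_mul_iff_left (pow_pos hq.pos e)).mp hd3
      have hd5 : q ^ M ∣ (Nat.factorial i / q ^ e) * m.choose i :=
        (pow_dvd_pow q (by omega : M ≤ L - e)).trans hd4
      exact (Nat.Coprime.pow_left M hec).dvd_of_dvd_mul_left hd5
    have heq := hmain m
    rw [hma] at heq
    have hsum : ∑ i ∈ Finset.range (m + 1), m.choose i • g i
        = ∑ i ∈ Finset.range 2, m.choose i • g i := by
      symm
      apply Finset.sum_subset (Finset.range_subset_range.mpr (by omega))
      intro i _ hni
      have h2i : 2 ≤ i := by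
        by_contra h
        exact hni (Finset.mem_range.mpr (by omega))
      rcases le_or_gt i n with h | h
      · obtain ⟨d, hd⟩ := hdvd i h2i h
        rw [hd, mul_comm, mul_smul, hMkill i (by omega), smul_zero]
      · rw [hgz i (by omega), smul_zero]
    rw [hsum, Finset.sum_range_succ, Finset.sum_range_one,
      Nat.choose_zero_right, Nat.choose_one_right, one_smul] at heq
    have hg0 : g 0 = f x := by
      simp only [hg]
      rw [pow_zero]
      exact hone
    rw [hg0] at heq
    have h0 : m • g 1 = 0 := (left_eq_add.mp heq)
    have hmg1 : m • g 1 = g 1 := by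
      obtain ⟨d, hd⟩ := (pow_dvd_pow q (by omega : M ≤ L)).trans hqL_dvd
      have hm' : m = 1 + q ^ M * d := by omega
      rw [hm', add_smul, one_smul, mul_smul, smul_comm, hMkill 1 (by omega),
        smul_zero, add_zero]
    have hg1 : g 1 = f (x + a) - f x := by
      simp only [hg]
      rw [pow_one, map_sub, hone, hT]
      congr 1
      rw [hφs]
      rw [one_smul]
    rw [hmg1, hg1] at h0
    exact sub_eq_zero.mp h0
  refine ⟨f 0, fun x => ?_⟩
  rw [← zero_add x, key 0 x]
end

section
/- Let A be an abelian group, B an abelian group of finite exponent n ≥ 2, and δ(A,B) := sup{fdeg(f) : f : A → B}. Then δ(A,B) + 1 equals the least m with (Aug(ℤ_n[A]))^m = 0 (the nilpotency degree ν(ℤ_n[A]) of the augmentation ideal of the group ring ℤ/n[A]), with the convention ∞ + 1 = ∞. -/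
open scoped BigOperators

noncomputable def piHom (n : ℕ) (A : Type*) [AddCommGroup A] :
    AddMonoidAlgebra ℤ A →+* AddMonoidAlgebra (ZMod n) A :=
  AddMonoidAlgebra.liftNCRingHom
    (AddMonoidAlgebra.singleZeroRingHom.comp (Int.castRingHom (ZMod n)))
    (AddMonoidAlgebra.of (ZMod n) A) fun _ _ => Commute.all _ _

lemma piHom_single (n : ℕ) {A : Type*} [AddCommGroup A] (a : A) (z : ℤ) :
    piHom n A (AddMonoidAlgebra.single a z) = AddMonoidAlgebra.single a (z : ZMod n) := by
  simp [piHom, AddMonoidAlgebra.liftNCRingHom, AddMonoidAlgebra.liftNC_single,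
    AddMonoidAlgebra.singleZeroRingHom, AddMonoidAlgebra.of_apply,
    AddMonoidAlgebra.single_mul_single, ← zsmul_eq_mul]

lemma piHom_apply (n : ℕ) {A : Type*} [AddCommGroup A] (r : AddMonoidAlgebra ℤ A) (a : A) :
    (piHom n A r).coeff a = ((r.coeff a : ℤ) : ZMod n) := by
  induction r using AddMonoidAlgebra.induction_linear with
  | zero => simp
  | add f g hf hg => rw [map_add, AddMonoidAlgebra.coeff_add, AddMonoidAlgebra.coeff_add, Finsupp.add_apply, Finsupp.add_apply, hf, hg, Int.cast_add]
  | single a' z =>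
    rw [piHom_single]
    rcases eq_or_ne a' a with rfl | hne
    · simp
    · simp [AddMonoidAlgebra.coeff_single, Finsupp.single_apply, hne]

lemma piHom_surjective (n : ℕ) {A : Type*} [AddCommGroup A] :
    Function.Surjective (piHom n A) := by
  intro s
  refine ⟨AddMonoidAlgebra.ofCoeff (Finsupp.mapRange (ZMod.cast : ZMod n → ℤ) (by simp) s.coeff), ?_⟩
  ext a
  rw [piHom_apply]
  simp [AddMonoidAlgebra.coeff_ofCoeff, Finsupp.mapRange_apply, ZMod.intCast_zmod_cast]

lemma piHom_map_aug (n : ℕ) {A : Type*} [AddCommGroup A] :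
    Ideal.map (piHom n A) (augIdeal A) = augIdealR (ZMod n) A := by
  rw [augIdeal, augIdealR, augIdealR, Ideal.map_span]
  congr 1
  ext s
  constructor
  · rintro ⟨r, ⟨a, rfl⟩, rfl⟩
    exact ⟨a, by rw [map_sub, map_one, piHom_single]; norm_num⟩
  · rintro ⟨a, rfl⟩
    exact ⟨AddMonoidAlgebra.single a 1 - 1, ⟨a, rfl⟩,
      by rw [map_sub, map_one, piHom_single]; norm_num⟩

lemma act_eq_zero {A B : Type*} [AddCommGroup A] [AddCommGroup B] (n : ℕ)
    (hexp : AddMonoid.exponent B = n) (r : AddMonoidAlgebra ℤ A)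
    (hr : piHom n A r = 0) (f : A → B) : groupRingAct r f = 0 := by
  funext x
  rw [groupRingAct, Finsupp.sum]
  refine Finset.sum_eq_zero fun a _ => ?_
  have h0 : ((r.coeff a : ℤ) : ZMod n) = 0 := by rw [← piHom_apply, hr]; rfl
  obtain ⟨k, hk⟩ := (ZMod.intCast_zmod_eq_zero_iff_dvd _ _).1 h0
  rw [hk, mul_smul, natCast_zsmul, ← hexp, AddMonoid.exponent_nsmul_eq_zero]

lemma fdeg_le_of_pow_bot {A B : Type*} [AddCommGroup A] [AddCommGroup B] (n : ℕ)
    (hexp : AddMonoid.exponent B = n) (k : ℕ)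
    (hbot : augIdealR (ZMod n) A ^ (k + 1) = ⊥) (f : A → B) : fdeg f ≤ (k : ℕ∞) := by
  apply sInf_le
  refine ⟨k, rfl, fun r hr => ?_⟩
  apply act_eq_zero n hexp
  have : piHom n A r ∈ Ideal.map (piHom n A) (augIdeal A ^ (k + 1)) :=
    Ideal.mem_map_of_mem _ hr
  rw [Ideal.map_pow, piHom_map_aug, hbot] at this
  exact this

lemma exists_fdeg_ge {A B : Type*} [AddCommGroup A] [AddCommGroup B] (n : ℕ)
    (hn : 2 ≤ n) (hexp : AddMonoid.exponent B = n) (m : ℕ)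
    (hne : augIdealR (ZMod n) A ^ m ≠ ⊥) : ∃ g : A → B, (m : ℕ∞) ≤ fdeg g := by
  classical
  obtain ⟨s, hs, hs0⟩ := Submodule.exists_mem_ne_zero_of_ne_bot hne
  rw [← piHom_map_aug n, ← Ideal.map_pow] at hs
  obtain ⟨r, hr, rfl⟩ := (Ideal.mem_map_iff_of_surjective (piHom n A) (piHom_surjective n)).1 hs
  obtain ⟨a0, ha0⟩ : ∃ a0, (piHom n A r).coeff a0 ≠ 0 := by
    by_contra h; push_neg at h; exact hs0 (AddMonoidAlgebra.ext (Finsupp.ext h))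
  rw [piHom_apply] at ha0
  have hEE : AddMonoid.ExponentExists B := by
    rw [← AddMonoid.exponent_ne_zero, hexp]; omega
  obtain ⟨b, hb⟩ := AddMonoid.exists_addOrderOf_eq_exponent hEE
  rw [hexp] at hb
  set g : A → B := fun x => if x = a0 then b else 0 with hg
  have hne' : groupRingAct r g ≠ 0 := by
    intro h
    have h0 := congrFun h 0
    rw [groupRingAct, Finsupp.sum] at h0
    have hsum : ∀ a ∈ r.coeff.support, r.coeff a • g (0 + a) = if a = a0 then r.coeff a0 • b else 0 := by
      intro a _
      rcases eq_or_ne a a0 with rfl | hne2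
      · simp [hg]
      · simp [hg, hne2]
    rw [Finset.sum_congr rfl hsum, Finset.sum_ite_eq' r.coeff.support a0 (fun _ => r.coeff a0 • b)] at h0
    have hmem : a0 ∈ r.coeff.support := by
      rw [Finsupp.mem_support_iff]
      intro h'; rw [h'] at ha0; simp at ha0
    rw [if_pos hmem] at h0
    have : (n : ℤ) ∣ r.coeff a0 := by
      rw [← hb]; exact addOrderOf_dvd_iff_zsmul_eq_zero.2 h0
    exact ha0 ((ZMod.intCast_zmod_eq_zero_iff_dvd _ _).2 this)
  refine ⟨g, le_sInf ?_⟩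
  rintro N ⟨k, rfl, hk⟩
  rw [Nat.cast_le]
  by_contra hlt
  push_neg at hlt
  exact hne' (hk r (Ideal.pow_le_pow_right (by omega) hr))

theorem delta_add_one_eq_nu {A B : Type*} [AddCommGroup A] [AddCommGroup B]
    (n : ℕ) (hn : 2 ≤ n) (hexp : AddMonoid.exponent B = n) :
    (⨆ f : A → B, fdeg f) + 1 =
      sInf {M : ℕ∞ | ∃ m : ℕ, M = (m : ℕ∞) ∧ (augIdealR (ZMod n) A) ^ m = ⊥} := by
  classical
  by_cases h : ∃ m : ℕ, augIdealR (ZMod n) A ^ m = ⊥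
  · set m0 := Nat.find h with hm0def
    have hm0 : augIdealR (ZMod n) A ^ m0 = ⊥ := Nat.find_spec h
    have hmin : ∀ k < m0, augIdealR (ZMod n) A ^ k ≠ ⊥ := fun k hk => Nat.find_min h hk
    haveI : Fact (1 < n) := ⟨by omega⟩
    have h1 : 1 ≤ m0 := by
      by_contra h0
      push_neg at h0
      interval_cases m0
      rw [pow_zero, Ideal.one_eq_top] at hm0
      have : (1 : AddMonoidAlgebra (ZMod n) A) ∈ (⊥ : Ideal _) := hm0 ▸ Submodule.mem_top
      exact one_ne_zero ((Submodule.mem_bot _).1 this)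
    have hRHS : sInf {M : ℕ∞ | ∃ m : ℕ, M = (m : ℕ∞) ∧ (augIdealR (ZMod n) A) ^ m = ⊥}
        = (m0 : ℕ∞) := by
      apply le_antisymm
      · exact sInf_le ⟨m0, rfl, hm0⟩
      · refine le_sInf ?_
        rintro M ⟨m, rfl, hm⟩
        exact_mod_cast Nat.find_min' h hm
    have hLHS : (⨆ f : A → B, fdeg f) = ((m0 - 1 : ℕ) : ℕ∞) := by
      apply le_antisymm
      · refine iSup_le fun f => ?_
        exact fdeg_le_of_pow_bot n hexp (m0 - 1) (by rwa [Nat.sub_add_cancel h1]) f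
      · obtain ⟨g, hg⟩ := exists_fdeg_ge (B := B) n hn hexp (m0 - 1) (hmin _ (by omega))
        exact hg.trans (le_iSup _ g)
    rw [hLHS, hRHS]
    have : ((m0 - 1 : ℕ) : ℕ∞) + 1 = ((m0 - 1 + 1 : ℕ) : ℕ∞) := by push_cast; ring
    rw [this, Nat.sub_add_cancel h1]
  · push_neg at h
    have hRHS : {M : ℕ∞ | ∃ m : ℕ, M = (m : ℕ∞) ∧ (augIdealR (ZMod n) A) ^ m = ⊥} = ∅ := by
      ext M
      simp only [Set.mem_setOf_eq, Set.mem_empty_iff_false, iff_false]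
      rintro ⟨m, rfl, hm⟩
      exact h m hm
    rw [hRHS, sInf_empty]
    have : (⨆ f : A → B, fdeg f) = ⊤ := by
      rw [iSup_eq_top]
      intro c hc
      lift c to ℕ using hc.ne
      obtain ⟨g, hg⟩ := exists_fdeg_ge (B := B) n hn hexp (c + 1) (h (c + 1))
      exact ⟨g, lt_of_lt_of_le (by exact_mod_cast Nat.lt_succ_self c) hg⟩
    rw [this, top_add]
end

section
/- Let p be a prime, α_1, …, α_k ∈ ℕ, A = ∏_{i=1}^k ℤ/p^{α_i}, a ∈ A, and let χ_a : A → ℤ/p be the characteristic function of a (χ_a(a) = 1 and χ_a(x) = 0 for x ≠ a). Then fdeg(χ_a) = ∑_{i=1}^k (p^{α_i} − 1). -/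
open scoped BigOperators

abbrev Agrp (p k : ℕ) (α : Fin k → ℕ) := ∀ i : Fin k, ZMod (p ^ α i)

section Aux

variable {p : ℕ} [Fact p.Prime] {k : ℕ} {α : Fin k → ℕ} [inst : ∀ i, NeZero (p ^ α i)]



/-- translation operator -/
noncomputable def tauHom : Multiplicative (Agrp p k α) →* Module.End (ZMod p) (Agrp p k α → ZMod p) where
  toFun a := LinearMap.funLeft (ZMod p) (ZMod p) (· + Multiplicative.toAdd a)
  map_one' := by ext f x; simp
  map_mul' a b := by ext f x; simp [Module.End.mul_apply]; rw [add_assoc]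

noncomputable def phiR : AddMonoidAlgebra (ZMod p) (Agrp p k α) →ₐ[ZMod p] Module.End (ZMod p) (Agrp p k α → ZMod p) :=
  AddMonoidAlgebra.lift (ZMod p) _ _ tauHom

noncomputable def psi : AddMonoidAlgebra ℤ (Agrp p k α) →ₐ[ℤ] AddMonoidAlgebra (ZMod p) (Agrp p k α) :=
  AddMonoidAlgebra.lift ℤ _ _ (AddMonoidAlgebra.of (ZMod p) _)

lemma act_eq (r : AddMonoidAlgebra ℤ (Agrp p k α)) (f : Agrp p k α → ZMod p) :
    groupRingAct r f = phiR (psi r) f := by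
  induction r using AddMonoidAlgebra.induction_linear with
  | zero =>
    have : groupRingAct (0 : AddMonoidAlgebra ℤ (Agrp p k α)) f = 0 := by
      funext x; simp [groupRingAct]
    rw [this, map_zero, map_zero]; rfl
  | add r s hr hs =>
    have : groupRingAct (r + s) f = groupRingAct r f + groupRingAct s f := by
      funext x
      exact Finsupp.sum_add_index' (fun a => zero_smul ℤ _) (fun a b c => add_smul b c _)
    rw [this, hr, hs, map_add, map_add]; rfl
  | single a z =>
    funext x
    have h1 : groupRingAct (AddMonoidAlgebra.single a z) f x = z • f (x + a) := by
      simp only [groupRingAct]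
      exact Finsupp.sum_single_index (zero_smul ℤ _)
    rw [h1]
    have h2 : psi (AddMonoidAlgebra.single a z) =
        z • AddMonoidAlgebra.single a (1 : ZMod p) := by
      unfold psi
      rw [AddMonoidAlgebra.lift_single]
      rfl
    rw [h2, map_zsmul]
    have h3 : phiR (AddMonoidAlgebra.single a (1 : ZMod p)) = tauHom (Multiplicative.ofAdd a) := by
      unfold phiR
      rw [AddMonoidAlgebra.lift_single, one_smul]
    rw [h3]
    rfl

end Aux

instance charP_AMA (p : ℕ) [Fact p.Prime] (G : Type*) [AddCommGroup G] :
    CharP (AddMonoidAlgebra (ZMod p) G) p :=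
  charP_of_injective_ringHom (f := AddMonoidAlgebra.singleZeroRingHom)
    (fun a b h => by
      have := congrArg (fun r : AddMonoidAlgebra (ZMod p) G => r.coeff 0) h
      simpa [AddMonoidAlgebra.singleZeroRingHom] using this) p

/-- Key polynomial identity over `ZMod p`. -/
lemma polyKey (p : ℕ) [Fact p.Prime] (m : ℕ) :
    (Polynomial.X - 1 : Polynomial (ZMod p)) ^ (p ^ m - 1) =
      ∑ j ∈ Finset.range (p ^ m), (Polynomial.X : Polynomial (ZMod p)) ^ j := by
  have hq1 : 1 ≤ p ^ m := Nat.one_le_pow _ _ (Fact.out (p := p.Prime)).pos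
  have hXne : (Polynomial.X - 1 : Polynomial (ZMod p)) ≠ 0 := by
    simpa using Polynomial.X_sub_C_ne_zero (1 : ZMod p)
  apply mul_right_cancel₀ hXne
  rw [geom_sum_mul, ← pow_succ, Nat.sub_add_cancel hq1]
  have : (Polynomial.X - 1 : Polynomial (ZMod p)) ^ (p ^ m) =
      Polynomial.X ^ (p ^ m) + (-1 : Polynomial (ZMod p)) ^ (p ^ m) := by
    rw [sub_eq_add_neg]
    exact add_pow_char_pow (p := p) (n := m) ..

  rw [this, neg_one_pow_char_pow, sub_eq_add_neg]


section Aux3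

variable {p : ℕ} [Fact p.Prime] {k : ℕ} {α : Fin k → ℕ} [inst : ∀ i, NeZero (p ^ α i)]

/-- generator of the augmentation ideal of `ℤ[A]` -/
noncomputable def Sgen (i : Fin k) : AddMonoidAlgebra ℤ (Agrp p k α) :=
  AddMonoidAlgebra.single (Pi.single i 1) 1 - 1

/-- generator of the augmentation ideal of `𝔽_p[A]` -/
noncomputable def sR (i : Fin k) : AddMonoidAlgebra (ZMod p) (Agrp p k α) :=
  AddMonoidAlgebra.single (Pi.single i 1) 1 - 1

lemma psi_single (a : Agrp p k α) (z : ℤ) :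
    psi (AddMonoidAlgebra.single a z) = z • AddMonoidAlgebra.single a (1 : ZMod p) := by
  unfold psi
  rw [AddMonoidAlgebra.lift_single]
  rfl

lemma psi_Sgen (i : Fin k) : psi (Sgen i) = sR (p := p) (α := α) i := by
  rw [Sgen, map_sub, map_one, psi_single, one_smul, sR]

lemma single_pow_q (i : Fin k) :
    (AddMonoidAlgebra.single (Pi.single i 1) (1 : ZMod p) :
      AddMonoidAlgebra (ZMod p) (Agrp p k α)) ^ (p ^ α i) = 1 := by
  rw [AddMonoidAlgebra.single_pow, one_pow]
  have h1 : (p ^ α i) • (Pi.single i 1 : Agrp p k α) = 0 := by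
    rw [← Pi.single_smul]
    have : (p ^ α i) • (1 : ZMod (p ^ α i)) = 0 := by
      simp [nsmul_eq_mul, ZMod.natCast_self]
    rw [this, Pi.single_zero]
  rw [h1]
  rfl

lemma sR_pow_q (i : Fin k) : sR (p := p) (α := α) i ^ (p ^ α i) = 0 := by
  rw [sR, sub_eq_add_neg]
  have := add_pow_char_pow (R := AddMonoidAlgebra (ZMod p) (Agrp p k α)) (p := p) (n := α i)
    (x := AddMonoidAlgebra.single (Pi.single i 1) (1 : ZMod p)) (y := -1)
  rw [this, single_pow_q, neg_one_pow_char_pow]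
  ring

lemma sR_geom (i : Fin k) :
    sR (p := p) (α := α) i ^ (p ^ α i - 1) =
      ∑ j ∈ Finset.range (p ^ α i),
        (AddMonoidAlgebra.single (Pi.single i 1) (1 : ZMod p) :
          AddMonoidAlgebra (ZMod p) (Agrp p k α)) ^ j := by
  have := congrArg (Polynomial.aeval
    (AddMonoidAlgebra.single (Pi.single i 1) (1 : ZMod p) :
      AddMonoidAlgebra (ZMod p) (Agrp p k α))) (polyKey p (α i))
  simpa [sR] using this

end Aux3

section Aux4

set_option linter.unusedSectionVars false

variable {p : ℕ} [Fact p.Prime] {k : ℕ} {α : Fin k → ℕ} [inst : ∀ i, NeZero (p ^ α i)]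

lemma single_sub_one_mem (b : Agrp p k α) :
    AddMonoidAlgebra.single b (1 : ZMod p) - 1 ∈
      Ideal.span (Set.range (sR (p := p) (α := α))) := by
  set J := Ideal.span (Set.range (sR (p := p) (α := α))) with hJ
  set P : Agrp p k α → Prop := fun c => AddMonoidAlgebra.single c (1 : ZMod p) - 1 ∈ J with hP
  have h0 : P 0 := by
    have : (AddMonoidAlgebra.single (0 : Agrp p k α) (1 : ZMod p)) = 1 := rfl
    simp only [hP, this, sub_self]
    exact J.zero_mem
  have hadd : ∀ c d, P c → P d → P (c + d) := by
    intro c d hc hd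
    have key : AddMonoidAlgebra.single (c + d) (1 : ZMod p) - 1 =
        (AddMonoidAlgebra.single c (1 : ZMod p) - 1) * AddMonoidAlgebra.single d (1 : ZMod p) +
          (AddMonoidAlgebra.single d (1 : ZMod p) - 1) := by
      rw [sub_mul, AddMonoidAlgebra.single_mul_single, one_mul, one_mul]
      ring
    show _ ∈ J
    rw [key]
    exact J.add_mem (J.mul_mem_right _ hc) hd
  have hsmul : ∀ (n : ℕ) c, P c → P (n • c) := by
    intro n c hc
    induction n with
    | zero => simpa using h0
    | succ m ih => rw [succ_nsmul]; exact hadd _ _ ih hc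
  have hsingle : ∀ (i : Fin k) (z : ZMod (p ^ α i)), P (Pi.single i z) := by
    intro i z
    have hz : Pi.single i z = (z.val) • (Pi.single i 1 : Agrp p k α) := by
      rw [← Pi.single_smul, nsmul_eq_mul, mul_one,
        (ZMod.natCast_rightInverse z : ((z.val : ℕ) : ZMod (p ^ α i)) = z)]
    rw [hz]
    refine hsmul _ _ ?_
    exact Ideal.subset_span ⟨i, rfl⟩
  have hb : b = ∑ i, Pi.single i (b i) := (Finset.univ_sum_single b).symm
  rw [hb]
  exact Finset.sum_induction _ P hadd h0 (fun i _ => hsingle i (b i))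

lemma psi_mem_span {r : AddMonoidAlgebra ℤ (Agrp p k α)} (hr : r ∈ augIdeal (Agrp p k α)) :
    psi r ∈ Ideal.span (Set.range (sR (p := p) (α := α))) := by
  have : Ideal.map (psi (p := p) (α := α)).toRingHom (augIdeal (Agrp p k α)) ≤
      Ideal.span (Set.range (sR (p := p) (α := α))) := by
    rw [augIdeal, augIdealR, Ideal.map_span]
    refine Ideal.span_le.mpr ?_
    rintro x ⟨y, ⟨b, rfl⟩, rfl⟩
    have : (psi (p := p) (α := α)).toRingHom (AddMonoidAlgebra.single b 1 - 1) =
        AddMonoidAlgebra.single b (1 : ZMod p) - 1 := by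
      show psi (AddMonoidAlgebra.single b 1 - 1) = _
      rw [map_sub, map_one, psi_single, one_smul]
    rw [this]
    exact single_sub_one_mem b
  exact this (Ideal.mem_map_of_mem _ hr)

end Aux4

section Aux5

open Pointwise

set_option linter.unusedSectionVars false

variable {p : ℕ} [Fact p.Prime] {k : ℕ} {α : Fin k → ℕ} [inst : ∀ i, NeZero (p ^ α i)]

lemma prod_sR_eq_zero {n : ℕ} (hn : (∑ i, (p ^ α i - 1)) + 1 ≤ n) (g : Fin n → Fin k) :
    (∏ i : Fin n, sR (p := p) (α := α) (g i)) = 0 := by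
  classical
  -- pigeonhole
  have hcard : (Finset.univ : Finset (Fin n)).card =
      ∑ j : Fin k, (Finset.univ.filter fun i => g i = j).card :=
    Finset.card_eq_sum_card_fiberwise (fun i _ => Finset.mem_univ (g i))
  have hj : ∃ j : Fin k, p ^ α j ≤ (Finset.univ.filter fun i => g i = j).card := by
    by_contra h
    push_neg at h
    have hle : ∀ j : Fin k, (Finset.univ.filter fun i => g i = j).card ≤ p ^ α j - 1 := by
      intro j
      have := h j
      omega
    have : n ≤ ∑ j : Fin k, (p ^ α j - 1) := by
      calc n = (Finset.univ : Finset (Fin n)).card := by simp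
        _ = _ := hcard
        _ ≤ _ := Finset.sum_le_sum fun j _ => hle j
    omega
  obtain ⟨j, hj⟩ := hj
  have hsplit : (∏ i : Fin n, sR (p := p) (α := α) (g i)) =
      (∏ i ∈ Finset.univ.filter fun i => g i = j, sR (p := p) (α := α) (g i)) *
        ∏ i ∈ Finset.univ.filter fun i => ¬ g i = j, sR (p := p) (α := α) (g i) :=
    (Finset.prod_filter_mul_prod_filter_not _ _ _).symm
  have hfib : (∏ i ∈ Finset.univ.filter fun i => g i = j, sR (p := p) (α := α) (g i)) =
      sR (p := p) (α := α) j ^ (Finset.univ.filter fun i => g i = j).card := by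
    rw [Finset.prod_congr rfl (fun i hi => by rw [(Finset.mem_filter.mp hi).2]),
      Finset.prod_const]
  have hzero : sR (p := p) (α := α) j ^ (Finset.univ.filter fun i => g i = j).card = 0 := by
    obtain ⟨c, hc⟩ := Nat.exists_eq_add_of_le hj
    rw [hc, pow_add, sR_pow_q, zero_mul]
  rw [hsplit, hfib, hzero, zero_mul]

lemma psi_eq_zero {r : AddMonoidAlgebra ℤ (Agrp p k α)}
    (hr : r ∈ augIdeal (Agrp p k α) ^ ((∑ i, (p ^ α i - 1)) + 1)) :
    psi r = 0 := by
  classical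
  set N1 := (∑ i, (p ^ α i - 1)) + 1 with hN1
  have h1 : psi r ∈ Ideal.span (Set.range (sR (p := p) (α := α))) ^ N1 := by
    have hmap : psi r ∈ Ideal.map (psi (p := p) (α := α)).toRingHom
        (augIdeal (Agrp p k α) ^ N1) := Ideal.mem_map_of_mem _ hr
    rw [Ideal.map_pow] at hmap
    refine Ideal.pow_right_mono ?_ N1 hmap
    rw [Ideal.map_le_iff_le_comap]
    intro x hx
    exact psi_mem_span hx
  rw [Ideal.span, Submodule.span_pow] at h1
  have h2 : ((Set.range (sR (p := p) (α := α))) ^ N1 : Set (AddMonoidAlgebra (ZMod p) (Agrp p k α))) ⊆ {0} := by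
    intro x hx
    rw [Set.mem_pow] at hx
    obtain ⟨f, hf⟩ := hx
    have hx' : x = ∏ i : Fin N1, (f i : AddMonoidAlgebra (ZMod p) (Agrp p k α)) := by
      rw [← hf, List.prod_ofFn]
    choose g hg using fun i => (f i).2
    have hx'' : x = ∏ i : Fin N1, sR (p := p) (α := α) (g i) := by
      rw [hx']
      exact Finset.prod_congr rfl fun i _ => (hg i).symm
    rw [Set.mem_singleton_iff, hx'']
    exact prod_sR_eq_zero le_rfl g
  have h3 : Submodule.span (AddMonoidAlgebra (ZMod p) (Agrp p k α))
      ((Set.range (sR (p := p) (α := α))) ^ N1) ≤ ⊥ :=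
    Submodule.span_le.mpr (by simpa using h2)
  exact (Submodule.mem_bot _).mp (h3 h1)

end Aux5

section Aux6

set_option linter.unusedSectionVars false

variable {p : ℕ} [Fact p.Prime] {k : ℕ} {α : Fin k → ℕ} [inst : ∀ i, NeZero (p ^ α i)]

lemma Sgen_mem (i : Fin k) : Sgen (p := p) (α := α) i ∈ augIdeal (Agrp p k α) :=
  Ideal.subset_span ⟨Pi.single i 1, rfl⟩

lemma r0_mem :
    (∏ i, Sgen (p := p) (α := α) i ^ (p ^ α i - 1)) ∈
      augIdeal (Agrp p k α) ^ (∑ i, (p ^ α i - 1)) := by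
  classical
  have : ∀ s : Finset (Fin k),
      (∏ i ∈ s, Sgen (p := p) (α := α) i ^ (p ^ α i - 1)) ∈
        augIdeal (Agrp p k α) ^ (∑ i ∈ s, (p ^ α i - 1)) := by
    intro s
    induction s using Finset.induction with
    | empty => simp
    | insert _ _ hnot ih =>
      rename_i j s
      rw [Finset.prod_insert hnot, Finset.sum_insert hnot, pow_add]
      exact Ideal.mul_mem_mul (Ideal.pow_mem_pow (Sgen_mem j) _) ih
  exact this Finset.univ

lemma rho_eq :
    (∏ i, sR (p := p) (α := α) i ^ (p ^ α i - 1)) =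
      ∑ b : Agrp p k α, AddMonoidAlgebra.single b (1 : ZMod p) := by
  classical
  have step1 : ∀ i : Fin k,
      sR (p := p) (α := α) i ^ (p ^ α i - 1) =
        ∑ z : ZMod (p ^ α i),
          AddMonoidAlgebra.single (Pi.single i z : Agrp p k α) (1 : ZMod p) := by
    intro i
    rw [sR_geom]
    rw [Finset.sum_bij' (i := fun (j : ℕ) (_ : j ∈ Finset.range (p ^ α i)) => (j : ZMod (p ^ α i)))
      (j := fun z (_ : z ∈ Finset.univ) => z.val)
      (hi := fun j hj => Finset.mem_univ _)
      (hj := fun z _ => Finset.mem_range.mpr (ZMod.val_lt z))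
      (left_neg := fun j hj => ZMod.val_natCast_of_lt (Finset.mem_range.mp hj))
      (right_neg := fun z _ => ZMod.natCast_rightInverse z)
      (h := ?_)]
    intro j hj
    rw [AddMonoidAlgebra.single_pow, one_pow]
    congr 1
    rw [← Pi.single_smul, nsmul_eq_mul, mul_one]
  rw [Finset.prod_congr rfl fun i _ => step1 i]
  rw [Finset.prod_univ_sum]
  rw [← Fintype.piFinset_univ]
  apply Finset.sum_congr rfl
  intro b _
  rw [AddMonoidAlgebra.prod_single]
  congr 1
  · exact Finset.univ_sum_single b
  · simp

end Aux6

section Aux7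

set_option linter.unusedSectionVars false

variable {p : ℕ} [Fact p.Prime] {k : ℕ} {α : Fin k → ℕ} [inst : ∀ i, NeZero (p ^ α i)]

lemma phiR_single (b : Agrp p k α) :
    phiR (AddMonoidAlgebra.single b (1 : ZMod p)) = tauHom (Multiplicative.ofAdd b) := by
  unfold phiR
  rw [AddMonoidAlgebra.lift_single, one_smul]

lemma act_witness (a : Agrp p k α) :
    groupRingAct (∏ i, Sgen (p := p) (α := α) i ^ (p ^ α i - 1))
      (fun x : Agrp p k α => if x = a then (1 : ZMod p) else 0) ≠ 0 := by
  classical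
  set f : Agrp p k α → ZMod p := fun x => if x = a then (1 : ZMod p) else 0 with hf
  intro hcontra
  have h1 : psi (∏ i, Sgen (p := p) (α := α) i ^ (p ^ α i - 1)) =
      ∑ b : Agrp p k α, AddMonoidAlgebra.single b (1 : ZMod p) := by
    rw [map_prod]
    rw [Finset.prod_congr rfl fun i _ => by rw [map_pow, psi_Sgen]]
    exact rho_eq
  have h2 : groupRingAct (∏ i, Sgen (p := p) (α := α) i ^ (p ^ α i - 1)) f 0 = 1 := by
    rw [act_eq, h1, map_sum]
    have : (∑ b : Agrp p k α, phiR (AddMonoidAlgebra.single b (1 : ZMod p))) f 0 =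
        ∑ b : Agrp p k α, f (0 + b) := by
      rw [LinearMap.sum_apply]
      rw [Finset.sum_apply]
      exact Finset.sum_congr rfl fun b _ => by rw [phiR_single]; rfl
    rw [this]
    simp only [zero_add, hf]
    rw [Finset.sum_ite_eq' Finset.univ a fun _ => (1 : ZMod p)]
    simp
  rw [hcontra] at h2
  simp at h2

theorem fdeg_char_fun_aux (a : Agrp p k α) :
    fdeg (fun x : Agrp p k α => if x = a then (1 : ZMod p) else 0) =
      ((∑ i : Fin k, (p ^ α i - 1) : ℕ) : ℕ∞) := by
  classical
  set f : Agrp p k α → ZMod p := fun x => if x = a then (1 : ZMod p) else 0 with hf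
  set N : ℕ := ∑ i : Fin k, (p ^ α i - 1) with hN
  rw [fdeg]
  apply le_antisymm
  · refine sInf_le ⟨N, rfl, ?_⟩
    intro r hr
    rw [act_eq, psi_eq_zero hr, map_zero]
    rfl
  · refine le_sInf ?_
    rintro m ⟨n, rfl, hn⟩
    rw [Nat.cast_le]
    by_contra h
    push_neg at h
    have hle : n + 1 ≤ N := h
    have hmem : (∏ i, Sgen (p := p) (α := α) i ^ (p ^ α i - 1)) ∈
        augIdeal (Agrp p k α) ^ (n + 1) :=
      Ideal.pow_le_pow_right hle r0_mem
    exact act_witness a (hn _ hmem)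

end Aux7

theorem fdeg_char_fun {p : ℕ} (hp : p.Prime) {k : ℕ} (α : Fin k → ℕ)
    (hα : ∀ i, 0 < α i) (a : ∀ i : Fin k, ZMod (p ^ α i)) :
    fdeg (fun x : ∀ i : Fin k, ZMod (p ^ α i) => if x = a then (1 : ZMod p) else 0) =
      ((∑ i : Fin k, (p ^ α i - 1) : ℕ) : ℕ∞) := by
  haveI : Fact p.Prime := ⟨hp⟩
  haveI : ∀ i, NeZero (p ^ α i) := fun i => ⟨pow_ne_zero _ hp.pos.ne'⟩
  exact fdeg_char_fun_aux a
end
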